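/- arXiv:1810.05542 — 5 statements merged into one kernel-verified Lean document; each statement's English description precedes it below -/
import Mathlib

section
/- Let Σ₁ and Σ₂ be systems in driving variable form with the same external space W and consistent subspaces V₁*, V₂*. A linear subspace S ⊆ X₁ × X₂ satisfying π_{X₁}(S) ⊆ V₁* and π_{X₂}(S) ⊆ V₂* is a trajectory simulation relation of Σ₁ by Σ₂ if and only if for all (x₁, x₂) ∈ S the following hold: (i) for every d₁ ∈ D₁ with A₁x₁ + G₁d₁ ∈ V₁* there exists d₂ ∈ D₂ with A₂x₂ + G₂d₂ ∈ V₂* and (A₁x₁ + G₁d₁, A₂x₂ + G₂d₂) ∈ S; (ii) C₁x₁ = C₂x₂. -/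
/-- A linear system in driving variable form `ẋ = A x + G d`, `w = C x`, `0 = H x`. -/
structure DVSystem (X W D Y : Type)
    [AddCommGroup X] [Module ℝ X] [AddCommGroup W] [Module ℝ W]
    [AddCommGroup D] [Module ℝ D] [AddCommGroup Y] [Module ℝ Y] where
  A : X →ₗ[ℝ] X
  G : D →ₗ[ℝ] X
  C : X →ₗ[ℝ] W
  H : X →ₗ[ℝ] Y

namespace DVSystem

section basic

variable {X W D Y : Type}
  [AddCommGroup X] [Module ℝ X] [AddCommGroup W] [Module ℝ W]
  [AddCommGroup D] [Module ℝ D] [AddCommGroup Y] [Module ℝ Y]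

/-- A subspace `U` is consistent-admissible if `A U ⊆ U + im G` and `U ⊆ ker H`. -/
def Admissible (P : DVSystem X W D Y) (U : Submodule ℝ X) : Prop :=
  U.map P.A ≤ U ⊔ LinearMap.range P.G ∧ U ≤ LinearMap.ker P.H

/-- The consistent subspace `V*`: the largest consistent-admissible subspace. -/
def V (P : DVSystem X W D Y) : Submodule ℝ X :=
  sSup {U | P.Admissible U}

end basic

section sim

variable {W : Type} [AddCommGroup W] [Module ℝ W]
variable {X₁ D₁ Y₁ : Type} [AddCommGroup X₁] [Module ℝ X₁]
  [AddCommGroup D₁] [Module ℝ D₁] [AddCommGroup Y₁] [Module ℝ Y₁]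
variable {X₂ D₂ Y₂ : Type} [AddCommGroup X₂] [Module ℝ X₂]
  [AddCommGroup D₂] [Module ℝ D₂] [AddCommGroup Y₂] [Module ℝ Y₂]

/-- Items (i)-(ii) of the (algebraic) definition of a simulation relation. -/
def SimConds (P₁ : DVSystem X₁ W D₁ Y₁) (P₂ : DVSystem X₂ W D₂ Y₂)
    (S : Submodule ℝ (X₁ × X₂)) : Prop :=
  ∀ x₁ x₂, (x₁, x₂) ∈ S →
    (∀ d₁ : D₁, P₁.A x₁ + P₁.G d₁ ∈ P₁.V →
      ∃ d₂ : D₂, P₂.A x₂ + P₂.G d₂ ∈ P₂.V ∧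
        (P₁.A x₁ + P₁.G d₁, P₂.A x₂ + P₂.G d₂) ∈ S) ∧
    P₁.C x₁ = P₂.C x₂

/-- `S` is a simulation relation of `P₁` by `P₂`. -/
def IsSimRel (P₁ : DVSystem X₁ W D₁ Y₁) (P₂ : DVSystem X₂ W D₂ Y₂)
    (S : Submodule ℝ (X₁ × X₂)) : Prop :=
  S.map (LinearMap.fst ℝ X₁ X₂) ≤ P₁.V ∧ S.map (LinearMap.snd ℝ X₁ X₂) ≤ P₂.V ∧
    SimConds P₁ P₂ S

/-- `S` is a full simulation relation of `P₁` by `P₂`: in addition `π₁(S) = V₁*`. -/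
def IsFullSimRel (P₁ : DVSystem X₁ W D₁ Y₁) (P₂ : DVSystem X₂ W D₂ Y₂)
    (S : Submodule ℝ (X₁ × X₂)) : Prop :=
  IsSimRel P₁ P₂ S ∧ S.map (LinearMap.fst ℝ X₁ X₂) = P₁.V

/-- `P₁ ≼ P₂`: `P₁` is simulated by `P₂`. -/
def Simulates (P₁ : DVSystem X₁ W D₁ Y₁) (P₂ : DVSystem X₂ W D₂ Y₂) : Prop :=
  ∃ S : Submodule ℝ (X₁ × X₂), IsFullSimRel P₁ P₂ S

/-- The composition `P₁ ∘ P₂` obtained by sharing the external variable `w₁ = w₂`. -/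
noncomputable def comp (P₁ : DVSystem X₁ W D₁ Y₁) (P₂ : DVSystem X₂ W D₂ Y₂) :
    DVSystem (X₁ × X₂) W (D₁ × D₂) (Y₁ × Y₂ × W) where
  A := P₁.A.prodMap P₂.A
  G := P₁.G.prodMap P₂.G
  C := (1/2 : ℝ) • (P₁.C ∘ₗ LinearMap.fst ℝ X₁ X₂ + P₂.C ∘ₗ LinearMap.snd ℝ X₁ X₂)
  H := (P₁.H ∘ₗ LinearMap.fst ℝ X₁ X₂).prod
    ((P₂.H ∘ₗ LinearMap.snd ℝ X₁ X₂).prod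
      (P₁.C ∘ₗ LinearMap.fst ℝ X₁ X₂ - P₂.C ∘ₗ LinearMap.snd ℝ X₁ X₂))

end sim

section relcomp

variable {X₁ X₂ X₃ : Type} [AddCommGroup X₁] [Module ℝ X₁]
  [AddCommGroup X₂] [Module ℝ X₂] [AddCommGroup X₃] [Module ℝ X₃]

/-- Composition of linear relations:
`{(x₁, x₃) | ∃ x₂, (x₁, x₂) ∈ S₁₂ ∧ (x₂, x₃) ∈ S₂₃}`. -/
def relComp (S₁₂ : Submodule ℝ (X₁ × X₂)) (S₂₃ : Submodule ℝ (X₂ × X₃)) :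
    Submodule ℝ (X₁ × X₃) where
  carrier := {p | ∃ x₂, (p.1, x₂) ∈ S₁₂ ∧ (x₂, p.2) ∈ S₂₃}
  zero_mem' := ⟨0, S₁₂.zero_mem, S₂₃.zero_mem⟩
  add_mem' := by
    rintro a b ⟨y, hy1, hy2⟩ ⟨z, hz1, hz2⟩
    exact ⟨y + z, S₁₂.add_mem hy1 hz1, S₂₃.add_mem hy2 hz2⟩
  smul_mem' := by
    rintro c a ⟨y, h1, h2⟩
    exact ⟨c • y, S₁₂.smul_mem c h1, S₂₃.smul_mem c h2⟩

/-- The pairing `{(x, (x₁, x₂)) | (x, x₁) ∈ S₁ ∧ (x, x₂) ∈ S₂}` of two relations. -/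
def pairRel (S₁ : Submodule ℝ (X₁ × X₂)) (S₂ : Submodule ℝ (X₁ × X₃)) :
    Submodule ℝ (X₁ × X₂ × X₃) where
  carrier := {p | (p.1, p.2.1) ∈ S₁ ∧ (p.1, p.2.2) ∈ S₂}
  zero_mem' := ⟨S₁.zero_mem, S₂.zero_mem⟩
  add_mem' := by
    rintro a b ⟨ha1, ha2⟩ ⟨hb1, hb2⟩
    exact ⟨S₁.add_mem ha1 hb1, S₂.add_mem ha2 hb2⟩
  smul_mem' := by
    rintro c a ⟨h1, h2⟩
    exact ⟨S₁.smul_mem c h1, S₂.smul_mem c h2⟩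

end relcomp

section contract

variable {W : Type} [AddCommGroup W] [Module ℝ W]
variable {X D Y Xa Da Ya Xg Dg Yg : Type}
  [AddCommGroup X] [Module ℝ X] [AddCommGroup D] [Module ℝ D]
  [AddCommGroup Y] [Module ℝ Y]
  [AddCommGroup Xa] [Module ℝ Xa] [AddCommGroup Da] [Module ℝ Da]
  [AddCommGroup Ya] [Module ℝ Ya]
  [AddCommGroup Xg] [Module ℝ Xg] [AddCommGroup Dg] [Module ℝ Dg]
  [AddCommGroup Yg] [Module ℝ Yg]

/-- `Sys` implements the contract `(Ass, Gar)` if `E ∘ Sys ≼ Gar` for every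
compatible environment `E`, i.e., every environment with `E ≼ Ass`. -/
def Implements (Sys : DVSystem X W D Y)
    (Ass : DVSystem Xa W Da Ya) (Gar : DVSystem Xg W Dg Yg) : Prop :=
  ∀ (Xe De Ye : Type) [AddCommGroup Xe] [Module ℝ Xe] [FiniteDimensional ℝ Xe]
    [AddCommGroup De] [Module ℝ De] [FiniteDimensional ℝ De]
    [AddCommGroup Ye] [Module ℝ Ye] [FiniteDimensional ℝ Ye]
    (E : DVSystem Xe W De Ye),
    Simulates E Ass → Simulates (comp E Sys) Gar

end contract

section refine

variable {W : Type} [AddCommGroup W] [Module ℝ W]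
variable {Xa Da Ya Xg Dg Yg Xa' Da' Ya' Xg' Dg' Yg' : Type}
  [AddCommGroup Xa] [Module ℝ Xa] [AddCommGroup Da] [Module ℝ Da]
  [AddCommGroup Ya] [Module ℝ Ya]
  [AddCommGroup Xg] [Module ℝ Xg] [AddCommGroup Dg] [Module ℝ Dg]
  [AddCommGroup Yg] [Module ℝ Yg]
  [AddCommGroup Xa'] [Module ℝ Xa'] [AddCommGroup Da'] [Module ℝ Da']
  [AddCommGroup Ya'] [Module ℝ Ya']
  [AddCommGroup Xg'] [Module ℝ Xg'] [AddCommGroup Dg'] [Module ℝ Dg']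
  [AddCommGroup Yg'] [Module ℝ Yg']

/-- The contract `(Ass', Gar')` refines the contract `(Ass, Gar)`:
`Ass ≼ Ass'` and `Ass ∘ Gar' ≼ Gar`. -/
def Refines (Ass' : DVSystem Xa' W Da' Ya') (Gar' : DVSystem Xg' W Dg' Yg')
    (Ass : DVSystem Xa W Da Ya) (Gar : DVSystem Xg W Dg Yg) : Prop :=
  Simulates Ass Ass' ∧ Simulates (comp Ass Gar') Gar

end refine

end DVSystem

open DVSystem


set_option maxHeartbeats 1000000
set_option synthInstance.maxHeartbeats 400000
open Set NormedSpace

/-- Linear selection lemma. -/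
lemma exists_linear_selection {E F : Type} [AddCommGroup E] [Module ℝ E]
    [AddCommGroup F] [Module ℝ F]
    (L : Submodule ℝ (E × F)) (U : Submodule ℝ E)
    (h : ∀ x ∈ U, ∃ y, (x, y) ∈ L) :
    ∃ K : E →ₗ[ℝ] F, ∀ x ∈ U, (x, K x) ∈ L := by
  classical
  set L' : Submodule ℝ (E × F) := L ⊓ U.prod ⊤ with hL'
  have hmemfst : ∀ p : L', (p : E × F).1 ∈ U := fun p => p.2.2.1
  set π : L' →ₗ[ℝ] U :=
    LinearMap.codRestrict U ((LinearMap.fst ℝ E F).comp L'.subtype) hmemfst with hπ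
  have hsurj : LinearMap.range π = ⊤ := by
    rw [LinearMap.range_eq_top]
    rintro ⟨x, hx⟩
    obtain ⟨y, hy⟩ := h x hx
    exact ⟨⟨(x, y), hy, hx, trivial⟩, rfl⟩
  obtain ⟨g, hg⟩ := π.exists_rightInverse_of_surjective hsurj
  obtain ⟨U', hc⟩ := U.exists_isCompl
  set proj : E →ₗ[ℝ] U := U.linearProjOfIsCompl U' hc
  refine ⟨(LinearMap.snd ℝ E F).comp (L'.subtype.comp (g.comp proj)), fun x hx => ?_⟩
  have hproj : proj x = ⟨x, hx⟩ := Submodule.linearProjOfIsCompl_apply_left hc ⟨x, hx⟩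
  have hfst : ((g (proj x) : E × F)).1 = x := by
    have := congrArg (fun f : U →ₗ[ℝ] U => (f ⟨x, hx⟩ : E)) hg
    simp only [LinearMap.comp_apply, LinearMap.id_apply] at this
    simpa [hproj, π, LinearMap.codRestrict] using (by
      have h2 := congrArg Subtype.val (LinearMap.congr_fun hg ⟨x, hx⟩)
      exact h2)
  have hmem : ((g (proj x) : E × F)) ∈ L := (g (proj x)).2.1
  have : ((g (proj x) : E × F)) = (x, ((g (proj x) : E × F)).2) := by
    exact Prod.ext hfst rfl
  rw [this] at hmem
  simpa [LinearMap.comp_apply] using hmem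


lemma deriv_mem_of_mem {E : Type} [NormedAddCommGroup E] [NormedSpace ℝ E]
    (U : Submodule ℝ E) (hU : IsClosed (U : Set E)) {f : ℝ → E} {f' : E} {t : ℝ}
    (ht : t ∈ Ici (0:ℝ)) (hmem : ∀ s ∈ Ici (0:ℝ), f s ∈ U)
    (hd : HasDerivWithinAt f f' (Ici 0) t) : f' ∈ U := by
  have h1 : HasDerivWithinAt f f' (Ioi t) t :=
    hd.mono fun s hs => Set.mem_Ici.2 (le_trans (Set.mem_Ici.1 ht) (le_of_lt (Set.mem_Ioi.1 hs)))
  rw [hasDerivWithinAt_iff_tendsto_slope] at h1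
  have he : (Ioi t) \ {t} = Ioi t := diff_singleton_eq_self (fun h => lt_irrefl t h)
  rw [he] at h1
  refine hU.mem_of_tendsto h1 ?_
  filter_upwards [self_mem_nhdsWithin] with s hs
  exact U.smul_mem _ (U.sub_mem (hmem s (Set.mem_Ici.2 (le_trans (Set.mem_Ici.1 ht) (le_of_lt (Set.mem_Ioi.1 hs))))) (hmem t ht))

lemma exists_ode_solution {E : Type} [NormedAddCommGroup E] [NormedSpace ℝ E]
    [CompleteSpace E] (M : E →L[ℝ] E) {g : ℝ → E} (hg : Continuous g) (y₀ : E) :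
    ∃ y : ℝ → E, y 0 = y₀ ∧ ∀ t, HasDerivAt y (M (y t) + g t) t := by
  classical
  letI : NormedAlgebra ℚ (E →L[ℝ] E) := NormedAlgebra.restrictScalars ℚ ℝ (E →L[ℝ] E)
  have hc : ∀ t : ℝ, HasDerivAt (fun u : ℝ => exp (u • M)) (exp (t • M) * M) t :=
    fun t => hasDerivAt_exp_smul_const M t
  set h : ℝ → E := fun s => (exp ((-s) • M)) (g s) with hh_def
  have hh : Continuous h := by
    have h1 : Continuous fun s : ℝ => exp ((-s) • M) :=
      exp_continuous.comp (continuous_neg.smul continuous_const)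
    exact h1.clm_apply hg
  set u : ℝ → E := fun t => y₀ + ∫ s in (0:ℝ)..t, h s with hu_def
  have hu : ∀ t, HasDerivAt u (h t) t := fun t =>
    ((hh.integral_hasStrictDerivAt 0 t).hasDerivAt).const_add y₀
  refine ⟨fun t => exp (t • M) (u t), ?_, ?_⟩
  · simp [u, exp_zero]
  · intro t
    have hd := (hc t).clm_apply (hu t)
    have e1 : (exp (t • M) * M) (u t) = M (exp (t • M) (u t)) := by
      have hcomm : Commute (exp (t • M)) M :=
        (((Commute.refl M).smul_left t).exp_left)
      rw [hcomm.eq, ContinuousLinearMap.mul_apply]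
    have e2 : exp (t • M) (h t) = g t := by
      rw [hh_def]
      have : exp (t • M) * exp ((-t) • M) = 1 := by
        rw [← exp_add_of_commute (((Commute.refl M).smul_left t).smul_right (-t))]
        simp
      calc exp (t • M) (exp ((-t) • M) (g t))
          = (exp (t • M) * exp ((-t) • M)) (g t) := by
            rw [ContinuousLinearMap.mul_apply]
        _ = g t := by rw [this]; simp
    rw [e1, e2] at hd
    exact hd

lemma ode_unique {E : Type} [NormedAddCommGroup E] [NormedSpace ℝ E]
    (M : E →L[ℝ] E) {g f₁ f₂ : ℝ → E}
    (h₁ : ∀ t ∈ Ici (0:ℝ), HasDerivWithinAt f₁ (M (f₁ t) + g t) (Ici 0) t)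
    (h₂ : ∀ t ∈ Ici (0:ℝ), HasDerivWithinAt f₂ (M (f₂ t) + g t) (Ici 0) t)
    (h0 : f₁ 0 = f₂ 0) : ∀ t ∈ Ici (0:ℝ), f₁ t = f₂ t := by
  intro b hb
  have hlip : ∀ t : ℝ, LipschitzWith ‖M‖₊ fun x => M x + g t := by
    intro t x y
    simpa [edist_add_right] using M.lipschitz x y
  have key := ODE_solution_unique (v := fun t x => M x + g t) (K := ‖M‖₊)
    (f := f₁) (g := f₂) (a := 0) (b := b) hlip
    (fun s hs => (h₁ s hs.1).continuousWithinAt.mono (fun z hz => hz.1))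
    (fun s hs => (h₁ s hs.1).mono (fun z hz => le_trans hs.1 hz))
    (fun s hs => (h₂ s hs.1).continuousWithinAt.mono (fun z hz => hz.1))
    (fun s hs => (h₂ s hs.1).mono (fun z hz => le_trans hs.1 hz))
    h0
  exact key ⟨hb, le_refl b⟩


namespace DVSystem

section vlemmas

variable {X W D Y : Type}
  [AddCommGroup X] [Module ℝ X] [AddCommGroup W] [Module ℝ W]
  [AddCommGroup D] [Module ℝ D] [AddCommGroup Y] [Module ℝ Y]

lemma V_admissible (P : DVSystem X W D Y) : P.Admissible P.V := by
  have hV : P.V = ⨆ U : {U : Submodule ℝ X // P.Admissible U}, (U : Submodule ℝ X) := by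
    rw [V, sSup_eq_iSup']; rfl
  constructor
  · rw [hV, Submodule.map_iSup]
    refine iSup_le fun U => le_trans U.2.1 (sup_le_sup_right ?_ _)
    exact le_iSup (fun U : {U : Submodule ℝ X // P.Admissible U} => (U : Submodule ℝ X)) U
  · rw [hV]
    exact iSup_le fun U => U.2.2

lemma exists_consistent_d (P : DVSystem X W D Y) {x : X} (hx : x ∈ P.V) :
    ∃ d, P.A x + P.G d ∈ P.V := by
  have h := P.V_admissible.1 (Submodule.mem_map_of_mem (f := P.A) hx)
  rw [Submodule.mem_sup] at h
  obtain ⟨u, hu, w, hw, hsum⟩ := h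
  obtain ⟨d, rfl⟩ := hw
  refine ⟨-d, ?_⟩
  have h2 : P.A x + P.G (-d) = u := by rw [map_neg, ← hsum]; abel
  rw [h2]; exact hu

lemma exists_friend (P : DVSystem X W D Y) :
    ∃ F : X →ₗ[ℝ] D, ∀ x ∈ P.V, P.A x + P.G (F x) ∈ P.V := by
  obtain ⟨K, hK⟩ := exists_linear_selection
    (Submodule.comap ((P.A.comp (LinearMap.fst ℝ X D)) + (P.G.comp (LinearMap.snd ℝ X D))) P.V)
    P.V (fun x hx => by
      obtain ⟨d, hd⟩ := P.exists_consistent_d hx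
      exact ⟨d, by simpa [Submodule.mem_comap] using hd⟩)
  exact ⟨K, fun x hx => by simpa [Submodule.mem_comap] using hK x hx⟩

end vlemmas

end DVSystem


section directions

variable {W Y₁ Y₂ : Type} [AddCommGroup W] [Module ℝ W]
    [AddCommGroup Y₁] [Module ℝ Y₁] [AddCommGroup Y₂] [Module ℝ Y₂]
    {X₁ D₁ X₂ D₂ : Type}
    [NormedAddCommGroup X₁] [NormedSpace ℝ X₁] [FiniteDimensional ℝ X₁]
    [NormedAddCommGroup D₁] [NormedSpace ℝ D₁] [FiniteDimensional ℝ D₁]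
    [NormedAddCommGroup X₂] [NormedSpace ℝ X₂] [FiniteDimensional ℝ X₂]
    [NormedAddCommGroup D₂] [NormedSpace ℝ D₂] [FiniteDimensional ℝ D₂]

lemma simconds_traj (P₁ : DVSystem X₁ W D₁ Y₁) (P₂ : DVSystem X₂ W D₂ Y₂)
    (S : Submodule ℝ (X₁ × X₂))
    (hp₁ : S.map (LinearMap.fst ℝ X₁ X₂) ≤ P₁.V)
    (hsc : SimConds P₁ P₂ S)
    {x₁0 : X₁} {x₂0 : X₂} (hS0 : (x₁0, x₂0) ∈ S)
    {x₁ : ℝ → X₁} {d₁ : ℝ → D₁} (hd₁ : ContinuousOn d₁ (Ici 0)) (h0 : x₁ 0 = x₁0)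
    (hderiv : ∀ t ∈ Ici (0:ℝ), HasDerivWithinAt x₁ (P₁.A (x₁ t) + P₁.G (d₁ t)) (Ici 0) t)
    (hmem : ∀ t ∈ Ici (0:ℝ), x₁ t ∈ P₁.V) :
    ∃ (x₂ : ℝ → X₂) (d₂ : ℝ → D₂),
      ContinuousOn d₂ (Ici 0) ∧ x₂ 0 = x₂0 ∧
      (∀ t ∈ Ici (0:ℝ), HasDerivWithinAt x₂ (P₂.A (x₂ t) + P₂.G (d₂ t)) (Ici 0) t) ∧
      (∀ t ∈ Ici (0:ℝ), (x₁ t, x₂ t) ∈ S) := by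
  classical
  obtain ⟨F₁, hF₁⟩ := P₁.exists_friend
  obtain ⟨K, hK⟩ := exists_linear_selection
    (Submodule.comap
      (P₂.A.comp ((LinearMap.snd ℝ X₁ X₂).comp ((LinearMap.fst ℝ (X₁ × X₂) D₁).comp
        (LinearMap.fst ℝ ((X₁ × X₂) × D₁) D₂)))
        + P₂.G.comp (LinearMap.snd ℝ ((X₁ × X₂) × D₁) D₂)) P₂.V ⊓
     Submodule.comap
      ((P₁.A.comp ((LinearMap.fst ℝ X₁ X₂).comp ((LinearMap.fst ℝ (X₁ × X₂) D₁).comp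
        (LinearMap.fst ℝ ((X₁ × X₂) × D₁) D₂)))
        + P₁.G.comp ((LinearMap.snd ℝ (X₁ × X₂) D₁).comp
          (LinearMap.fst ℝ ((X₁ × X₂) × D₁) D₂))).prod
       (P₂.A.comp ((LinearMap.snd ℝ X₁ X₂).comp ((LinearMap.fst ℝ (X₁ × X₂) D₁).comp
        (LinearMap.fst ℝ ((X₁ × X₂) × D₁) D₂)))
        + P₂.G.comp (LinearMap.snd ℝ ((X₁ × X₂) × D₁) D₂))) S)
    (Submodule.comap (LinearMap.fst ℝ (X₁ × X₂) D₁) S ⊓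
     Submodule.comap (P₁.A.comp ((LinearMap.fst ℝ X₁ X₂).comp (LinearMap.fst ℝ (X₁ × X₂) D₁))
        + P₁.G.comp (LinearMap.snd ℝ (X₁ × X₂) D₁)) P₁.V)
    (fun p hp => by
      rw [Submodule.mem_inf, Submodule.mem_comap, Submodule.mem_comap] at hp
      simp only [LinearMap.add_apply, LinearMap.comp_apply, LinearMap.fst_apply,
        LinearMap.snd_apply] at hp
      obtain ⟨d₂, hd₂1, hd₂2⟩ := (hsc p.1.1 p.1.2 (by rw [Prod.mk.eta]; exact hp.1)).1 p.2 hp.2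
      refine ⟨d₂, ?_⟩
      rw [Submodule.mem_inf, Submodule.mem_comap, Submodule.mem_comap]
      simp only [LinearMap.add_apply, LinearMap.comp_apply, LinearMap.fst_apply,
        LinearMap.snd_apply, LinearMap.prod_apply, Pi.prod]
      exact ⟨hd₂1, hd₂2⟩)
  have hK' : ∀ p : (X₁ × X₂) × D₁, p.1 ∈ S → P₁.A p.1.1 + P₁.G p.2 ∈ P₁.V →
      P₂.A p.1.2 + P₂.G (K p) ∈ P₂.V ∧
        (P₁.A p.1.1 + P₁.G p.2, P₂.A p.1.2 + P₂.G (K p)) ∈ S := by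
    intro p h1 h2
    have h3 := hK p (by
      rw [Submodule.mem_inf, Submodule.mem_comap, Submodule.mem_comap]
      simp only [LinearMap.add_apply, LinearMap.comp_apply, LinearMap.fst_apply,
        LinearMap.snd_apply]
      exact ⟨h1, h2⟩)
    rw [Submodule.mem_inf, Submodule.mem_comap, Submodule.mem_comap] at h3
    simpa only [LinearMap.add_apply, LinearMap.comp_apply, LinearMap.fst_apply,
      LinearMap.snd_apply, LinearMap.prod_apply, Function.prod] using h3
  clear hK
  -- closed-loop maps
  set Ξ : (X₁ × X₂) →ₗ[ℝ] (X₁ × X₂) :=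
    ((P₁.A + P₁.G.comp F₁).comp (LinearMap.fst ℝ X₁ X₂)).prod
      (P₂.A.comp (LinearMap.snd ℝ X₁ X₂)
        + P₂.G.comp (K.comp (LinearMap.prod LinearMap.id (F₁.comp (LinearMap.fst ℝ X₁ X₂)))))
    with hΞdef
  have hΞapp : ∀ z : X₁ × X₂, Ξ z =
      (P₁.A z.1 + P₁.G (F₁ z.1), P₂.A z.2 + P₂.G (K (z, F₁ z.1))) := fun z => rfl
  set B : D₁ →ₗ[ℝ] (X₁ × X₂) :=
    P₁.G.prod (P₂.G.comp (K.comp (LinearMap.prod (0 : D₁ →ₗ[ℝ] X₁ × X₂) LinearMap.id)))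
    with hBdef
  have hBapp : ∀ e : D₁, B e = (P₁.G e, P₂.G (K ((0 : X₁ × X₂), e))) := fun e => rfl
  have hz1V : ∀ z : X₁ × X₂, z ∈ S → z.1 ∈ P₁.V := fun z hz => hp₁ ⟨z, hz, rfl⟩
  have hΞS : ∀ z ∈ S, Ξ z ∈ S := by
    intro z hz
    have h2 := (hK' (z, F₁ z.1) hz (hF₁ z.1 (hz1V z hz))).2
    rw [hΞapp]
    exact h2
  have hBS : ∀ e : D₁, P₁.G e ∈ P₁.V → B e ∈ S := by
    intro e he
    have h2 := (hK' ((0 : X₁ × X₂), e) S.zero_mem (by simpa using he)).2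
    rw [hBapp]
    simpa using h2
  -- trajectory analysis
  have hVclosed : IsClosed ((P₁.V : Submodule ℝ X₁) : Set X₁) :=
    Submodule.closed_of_finiteDimensional _
  have hx₁cont : ContinuousOn x₁ (Ici 0) := fun t ht => (hderiv t ht).continuousWithinAt
  have hmax : Continuous fun t : ℝ => max t 0 := continuous_id.max continuous_const
  have hmaxmem : ∀ t : ℝ, max t 0 ∈ Ici (0:ℝ) := fun t => le_max_right t 0
  set e : ℝ → D₁ := fun t => d₁ (max t 0) - F₁ (x₁ (max t 0)) with hedef
  have hx₁max : Continuous fun t : ℝ => x₁ (max t 0) := hx₁cont.comp_continuous hmax hmaxmem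
  have he : Continuous e := (hd₁.comp_continuous hmax hmaxmem).sub
    ((F₁.continuous_of_finiteDimensional).comp hx₁max)
  have hderivV : ∀ s ∈ Ici (0:ℝ), P₁.A (x₁ s) + P₁.G (d₁ s) ∈ P₁.V := fun s hs =>
    deriv_mem_of_mem P₁.V hVclosed hs hmem (hderiv s hs)
  have hGe : ∀ t : ℝ, P₁.G (e t) ∈ P₁.V := by
    intro t
    have h1 := hderivV _ (hmaxmem t)
    have h2 := hF₁ _ (hmem _ (hmaxmem t))
    have h3 : P₁.G (e t) = (P₁.A (x₁ (max t 0)) + P₁.G (d₁ (max t 0)))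
        - (P₁.A (x₁ (max t 0)) + P₁.G (F₁ (x₁ (max t 0)))) := by
      simp only [hedef, map_sub]
      abel
    rw [h3]; exact Submodule.sub_mem _ h1 h2
  -- solve the ODE on S
  set MS : ↥S →L[ℝ] ↥S := LinearMap.toContinuousLinearMap (Ξ.restrict hΞS) with hMS
  set gS : ℝ → ↥S := fun t => ⟨B (e t), hBS (e t) (hGe t)⟩ with hgS
  have hgScont : Continuous gS := Continuous.subtype_mk
    ((B.continuous_of_finiteDimensional).comp he) _
  obtain ⟨y, hy0, hy'⟩ := exists_ode_solution MS hgScont ⟨(x₁0, x₂0), hS0⟩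
  set ξ : ℝ → X₁ × X₂ := fun t => (y t : X₁ × X₂) with hξdef
  have hξ0 : ξ 0 = (x₁0, x₂0) := by rw [hξdef]; simp only [hy0]
  have hξ' : ∀ t, HasDerivAt ξ (Ξ (ξ t) + B (e t)) t := by
    intro t
    have h1 := (S.subtypeL.hasFDerivAt (x := y t)).comp_hasDerivAt t (hy' t)
    have h2 : S.subtypeL (MS (y t) + gS t) = Ξ (ξ t) + B (e t) := by
      simp only [hMS, hgS, hξdef, Submodule.subtypeL_apply, Submodule.coe_add,
        LinearMap.coe_toContinuousLinearMap', LinearMap.restrict_coe_apply]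
    rw [h2] at h1
    exact h1
  have hξcont : Continuous ξ := continuous_iff_continuousAt.2 fun t => (hξ' t).continuousAt
  set M₁ : X₁ →L[ℝ] X₁ := LinearMap.toContinuousLinearMap (P₁.A + P₁.G.comp F₁) with hM₁
  have hM₁app : ∀ v : X₁, M₁ v = P₁.A v + P₁.G (F₁ v) := fun v => by
    rw [hM₁, LinearMap.coe_toContinuousLinearMap']
    rfl
  have hξ₁' : ∀ t ∈ Ici (0:ℝ),
      HasDerivWithinAt (fun s => (ξ s).1) (M₁ ((ξ t).1) + P₁.G (e t)) (Ici 0) t := by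
    intro t _
    have h1 := ((ContinuousLinearMap.fst ℝ X₁ X₂).hasFDerivAt
      (x := ξ t)).comp_hasDerivAt t (hξ' t)
    have h2 : (ContinuousLinearMap.fst ℝ X₁ X₂) (Ξ (ξ t) + B (e t))
        = M₁ ((ξ t).1) + P₁.G (e t) := by
      rw [map_add, hΞapp, hBapp, hM₁app]
      rfl
    rw [h2] at h1
    exact h1.hasDerivWithinAt
  have hx₁' : ∀ t ∈ Ici (0:ℝ),
      HasDerivWithinAt x₁ (M₁ (x₁ t) + P₁.G (e t)) (Ici 0) t := by
    intro t ht
    have hmt : max t 0 = t := max_eq_left ht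
    have h2 : M₁ (x₁ t) + P₁.G (e t) = P₁.A (x₁ t) + P₁.G (d₁ t) := by
      rw [hM₁app]
      simp only [hedef, hmt, map_sub]
      abel
    rw [h2]; exact hderiv t ht
  have hinit : (fun s => (ξ s).1) 0 = x₁ 0 := by
    simp only [hξ0, h0]
  have hξeq : ∀ t ∈ Ici (0:ℝ), (ξ t).1 = x₁ t :=
    ode_unique M₁ (g := fun t => P₁.G (e t)) hξ₁' hx₁' hinit
  -- conclusion
  refine ⟨fun t => (ξ t).2, fun t => K (ξ t, F₁ ((ξ t).1)) + K ((0 : X₁ × X₂), e t),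
    ?_, ?_, ?_, ?_⟩
  · refine Continuous.continuousOn (Continuous.add ?_ ?_)
    · exact (K.continuous_of_finiteDimensional).comp
        (hξcont.prodMk ((F₁.continuous_of_finiteDimensional).comp
          (continuous_fst.comp hξcont)))
    · exact (K.continuous_of_finiteDimensional).comp (continuous_const.prodMk he)
  · show (ξ 0).2 = x₂0
    rw [hξ0]
  · intro t _
    have h1 := ((ContinuousLinearMap.snd ℝ X₁ X₂).hasFDerivAt
      (x := ξ t)).comp_hasDerivAt t (hξ' t)
    have h2 : (ContinuousLinearMap.snd ℝ X₁ X₂) (Ξ (ξ t) + B (e t))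
        = P₂.A ((ξ t).2) + P₂.G (K (ξ t, F₁ ((ξ t).1)) + K ((0 : X₁ × X₂), e t)) := by
      rw [map_add, hΞapp, hBapp]
      show (P₂.A ((ξ t).2) + P₂.G (K (ξ t, F₁ (ξ t).1)))
          + P₂.G (K ((0 : X₁ × X₂), e t)) = _
      rw [map_add P₂.G]
      abel
    rw [h2] at h1
    exact h1.hasDerivWithinAt
  · intro t ht
    rw [← hξeq t ht, Prod.mk.eta]
    exact (y t).2

lemma traj_step (P₁ : DVSystem X₁ W D₁ Y₁) (P₂ : DVSystem X₂ W D₂ Y₂)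
    (S : Submodule ℝ (X₁ × X₂))
    (hp₁ : S.map (LinearMap.fst ℝ X₁ X₂) ≤ P₁.V)
    (hp₂ : S.map (LinearMap.snd ℝ X₁ X₂) ≤ P₂.V)
    {x₁0 : X₁} {x₂0 : X₂} (hS0 : (x₁0, x₂0) ∈ S)
    (hTr : ∀ (x₁ : ℝ → X₁) (d₁f : ℝ → D₁),
        ContinuousOn d₁f (Ici 0) → x₁ 0 = x₁0 →
        (∀ t ∈ Ici (0:ℝ), HasDerivWithinAt x₁ (P₁.A (x₁ t) + P₁.G (d₁f t)) (Ici 0) t) →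
        (∀ t ∈ Ici (0:ℝ), x₁ t ∈ P₁.V) →
        ∃ (x₂ : ℝ → X₂) (d₂ : ℝ → D₂), ContinuousOn d₂ (Ici 0) ∧ x₂ 0 = x₂0 ∧
          (∀ t ∈ Ici (0:ℝ), HasDerivWithinAt x₂ (P₂.A (x₂ t) + P₂.G (d₂ t)) (Ici 0) t) ∧
          (∀ t ∈ Ici (0:ℝ), (x₁ t, x₂ t) ∈ S))
    (d₁ : D₁) (hv : P₁.A x₁0 + P₁.G d₁ ∈ P₁.V) :
    ∃ d₂ : D₂, P₂.A x₂0 + P₂.G d₂ ∈ P₂.V ∧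
      (P₁.A x₁0 + P₁.G d₁, P₂.A x₂0 + P₂.G d₂) ∈ S := by
  classical
  obtain ⟨F₁, hF₁⟩ := P₁.exists_friend
  have hx₁0V : x₁0 ∈ P₁.V := hp₁ ⟨(x₁0, x₂0), hS0, rfl⟩
  set N : X₁ →ₗ[ℝ] X₁ := P₁.A + P₁.G.comp F₁ with hN
  have hNmem : ∀ v ∈ P₁.V, N v ∈ P₁.V := fun v hv' => hF₁ v hv'
  set MV : ↥(P₁.V) →L[ℝ] ↥(P₁.V) := LinearMap.toContinuousLinearMap (N.restrict hNmem)
    with hMV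
  have hwmem : P₁.G d₁ - P₁.G (F₁ x₁0) ∈ P₁.V := by
    have h1 : P₁.G d₁ - P₁.G (F₁ x₁0)
        = (P₁.A x₁0 + P₁.G d₁) - (P₁.A x₁0 + P₁.G (F₁ x₁0)) := by abel
    rw [h1]; exact Submodule.sub_mem _ hv (hF₁ x₁0 hx₁0V)
  obtain ⟨u, hu0, hu'⟩ := exists_ode_solution MV
    (g := fun _ => (⟨P₁.G d₁ - P₁.G (F₁ x₁0), hwmem⟩ : ↥(P₁.V)))
    continuous_const ⟨x₁0, hx₁0V⟩
  set x₁ : ℝ → X₁ := fun t => (u t : X₁) with hx₁def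
  set d₁f : ℝ → D₁ := fun t => F₁ (x₁ t) + (d₁ - F₁ x₁0) with hd₁fdef
  have hx₁0eq : x₁ 0 = x₁0 := by rw [hx₁def]; simp only [hu0]
  have hx₁' : ∀ t, HasDerivAt x₁ (P₁.A (x₁ t) + P₁.G (d₁f t)) t := by
    intro t
    have h1 := ((P₁.V).subtypeL.hasFDerivAt (x := u t)).comp_hasDerivAt t (hu' t)
    have h2 : (P₁.V).subtypeL (MV (u t) + ⟨P₁.G d₁ - P₁.G (F₁ x₁0), hwmem⟩)
        = P₁.A (x₁ t) + P₁.G (d₁f t) := by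
      simp only [hMV, hx₁def, hd₁fdef, Submodule.subtypeL_apply, Submodule.coe_add,
        LinearMap.coe_toContinuousLinearMap', LinearMap.restrict_coe_apply, hN,
        LinearMap.add_apply, LinearMap.comp_apply, map_add, map_sub]
      abel
    rw [h2] at h1
    exact h1
  have hx₁cont : Continuous x₁ := continuous_iff_continuousAt.2 fun t => (hx₁' t).continuousAt
  obtain ⟨x₂, d₂, hd₂cont, hx₂0, hx₂', hS'⟩ := hTr x₁ d₁f
    (((F₁.continuous_of_finiteDimensional.comp hx₁cont).add continuous_const).continuousOn)
    hx₁0eq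
    (fun t _ => (hx₁' t).hasDerivWithinAt)
    (fun t _ => (u t).2)
  have hd₁f0 : d₁f 0 = d₁ := by
    rw [hd₁fdef]
    simp only [hx₁0eq]
    abel
  refine ⟨d₂ 0, ?_, ?_⟩
  · have hmemV₂ : ∀ s ∈ Ici (0:ℝ), x₂ s ∈ P₂.V := fun s hs =>
      hp₂ ⟨(x₁ s, x₂ s), hS' s hs, rfl⟩
    have h1 := deriv_mem_of_mem P₂.V (Submodule.closed_of_finiteDimensional _)
      self_mem_Ici hmemV₂ (hx₂' 0 self_mem_Ici)
    rwa [hx₂0] at h1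
  · have hpair : ∀ s ∈ Ici (0:ℝ), (x₁ s, x₂ s) ∈ S := hS'
    have hd : HasDerivWithinAt (fun s => (x₁ s, x₂ s))
        (P₁.A (x₁ 0) + P₁.G (d₁f 0), P₂.A (x₂ 0) + P₂.G (d₂ 0)) (Ici 0) 0 :=
      ((hx₁' 0).hasDerivWithinAt).prodMk (hx₂' 0 self_mem_Ici)
    have h1 := deriv_mem_of_mem S (Submodule.closed_of_finiteDimensional _)
      self_mem_Ici hpair hd
    rwa [hx₁0eq, hx₂0, hd₁f0] at h1

end directions

/-- Lemma 2: a subspace with projections inside the consistent subspaces is a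
trajectory simulation relation if and only if the algebraic conditions (i)-(ii) hold. -/
theorem trajectory_simulation_iff_algebraic
    {W Y₁ Y₂ : Type} [AddCommGroup W] [Module ℝ W] [FiniteDimensional ℝ W]
    [AddCommGroup Y₁] [Module ℝ Y₁] [FiniteDimensional ℝ Y₁]
    [AddCommGroup Y₂] [Module ℝ Y₂] [FiniteDimensional ℝ Y₂]
    {X₁ D₁ X₂ D₂ : Type}
    [NormedAddCommGroup X₁] [NormedSpace ℝ X₁] [FiniteDimensional ℝ X₁]
    [NormedAddCommGroup D₁] [NormedSpace ℝ D₁] [FiniteDimensional ℝ D₁]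
    [NormedAddCommGroup X₂] [NormedSpace ℝ X₂] [FiniteDimensional ℝ X₂]
    [NormedAddCommGroup D₂] [NormedSpace ℝ D₂] [FiniteDimensional ℝ D₂]
    (P₁ : DVSystem X₁ W D₁ Y₁) (P₂ : DVSystem X₂ W D₂ Y₂)
    (S : Submodule ℝ (X₁ × X₂))
    (hp₁ : S.map (LinearMap.fst ℝ X₁ X₂) ≤ P₁.V)
    (hp₂ : S.map (LinearMap.snd ℝ X₁ X₂) ≤ P₂.V) :
    (∀ x₁0 x₂0, (x₁0, x₂0) ∈ S →
      (∀ (x₁ : ℝ → X₁) (d₁ : ℝ → D₁),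
          ContinuousOn d₁ (Set.Ici 0) → x₁ 0 = x₁0 →
          (∀ t ∈ Set.Ici (0 : ℝ),
            HasDerivWithinAt x₁ (P₁.A (x₁ t) + P₁.G (d₁ t)) (Set.Ici 0) t) →
          (∀ t ∈ Set.Ici (0 : ℝ), x₁ t ∈ P₁.V) →
          ∃ (x₂ : ℝ → X₂) (d₂ : ℝ → D₂),
            ContinuousOn d₂ (Set.Ici 0) ∧ x₂ 0 = x₂0 ∧
            (∀ t ∈ Set.Ici (0 : ℝ),
              HasDerivWithinAt x₂ (P₂.A (x₂ t) + P₂.G (d₂ t)) (Set.Ici 0) t) ∧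
            (∀ t ∈ Set.Ici (0 : ℝ), (x₁ t, x₂ t) ∈ S)) ∧
      P₁.C x₁0 = P₂.C x₂0) ↔
    SimConds P₁ P₂ S := by
  constructor
  · intro hL x₁ x₂ hS
    refine ⟨?_, (hL x₁ x₂ hS).2⟩
    intro d₁ hd₁
    exact traj_step P₁ P₂ S hp₁ hp₂ hS (hL x₁ x₂ hS).1 d₁ hd₁
  · intro hsc x₁0 x₂0 hS0
    refine ⟨?_, (hsc x₁0 x₂0 hS0).2⟩
    intro x₁ d₁ hd₁ h0 hderiv hmem
    exact simconds_traj P₁ P₂ S hp₁ hsc hS0 hd₁ h0 hderiv hmem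
end

section
/- Existence of the consistent subspace: let X, D, Y be finite-dimensional real vector spaces and A : X → X, G : D → X, H : X → Y linear maps. Then the collection of linear subspaces V ⊆ X satisfying A V ⊆ V + im G and V ⊆ ker H has a largest element with respect to subspace inclusion; equivalently, the supremum of all subspaces satisfying these two conditions itself satisfies them. -/
/-- A subspace `U` is consistent-admissible for the data `(A, G, H)` if
`A U ⊆ U + im G` and `U ⊆ ker H`. -/
def ConsistentAdmissible {X D Y : Type}
    [AddCommGroup X] [Module ℝ X] [AddCommGroup D] [Module ℝ D]
    [AddCommGroup Y] [Module ℝ Y]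
    (A : X →ₗ[ℝ] X) (G : D →ₗ[ℝ] X) (H : X →ₗ[ℝ] Y) (U : Submodule ℝ X) : Prop :=
  U.map A ≤ U ⊔ LinearMap.range G ∧ U ≤ LinearMap.ker H

/-- Existence of the consistent subspace: the collection of consistent-admissible
subspaces has a largest element; equivalently, the supremum of all
consistent-admissible subspaces is itself consistent-admissible. -/
theorem exists_largest_consistent_subspace {X D Y : Type}
    [AddCommGroup X] [Module ℝ X] [FiniteDimensional ℝ X]
    [AddCommGroup D] [Module ℝ D] [FiniteDimensional ℝ D]
    [AddCommGroup Y] [Module ℝ Y] [FiniteDimensional ℝ Y]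
    (A : X →ₗ[ℝ] X) (G : D →ₗ[ℝ] X) (H : X →ₗ[ℝ] Y) :
    (∃ Vs : Submodule ℝ X, ConsistentAdmissible A G H Vs ∧
      ∀ U : Submodule ℝ X, ConsistentAdmissible A G H U → U ≤ Vs) ∧
    ConsistentAdmissible A G H (sSup {U | ConsistentAdmissible A G H U}) := by
  have key : ConsistentAdmissible A G H (sSup {U | ConsistentAdmissible A G H U}) := by
    constructor
    · rw [sSup_eq_iSup', Submodule.map_iSup]
      rw [← sSup_eq_iSup']
      exact sSup_le fun V hV => by
        rcases hV with ⟨⟨U, hU⟩, rfl⟩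
        exact hU.1.trans (sup_le_sup_right (le_sSup hU) _)
    · exact sSup_le fun U hU => hU.2
  exact ⟨⟨_, key, fun U hU => le_sSup hU⟩, key⟩
end

section
/- Let Σ₁, Σ₂ be systems in driving variable form with the same external space W, and let V∘,* denote the consistent subspace of the composition Σ₁ ∘ Σ₂. Then π_{X₁}(V∘,*) ⊆ V₁* and π_{X₂}(V∘,*) ⊆ V₂*, i.e., the projection of the consistent subspace of the composition onto each factor is contained in the consistent subspace of the corresponding component system. -/
open DVSystem

section aux

lemma DVSystem.admissible_V {X W D Y : Type}
    [AddCommGroup X] [Module ℝ X] [AddCommGroup W] [Module ℝ W]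
    [AddCommGroup D] [Module ℝ D] [AddCommGroup Y] [Module ℝ Y]
    (P : DVSystem X W D Y) : P.Admissible P.V := by
  constructor
  · have hV : P.V = ⨆ U : {U | P.Admissible U}, (U : Submodule ℝ X) := sSup_eq_iSup' _
    rw [hV, Submodule.map_iSup]
    apply iSup_le
    intro U
    refine U.2.1.trans (sup_le_sup_right ?_ _)
    exact le_iSup (fun a : {U | P.Admissible U} => (a : Submodule ℝ X)) U
  · exact sSup_le fun U hU => hU.2

end aux


/-- The projections of the consistent subspace of `Σ₁ ∘ Σ₂` are contained in the
consistent subspaces of the components. -/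
theorem comp_consistent_proj_le {W : Type} [AddCommGroup W] [Module ℝ W] [FiniteDimensional ℝ W]
    {X₁ D₁ Y₁ : Type} [AddCommGroup X₁] [Module ℝ X₁] [FiniteDimensional ℝ X₁]
    [AddCommGroup D₁] [Module ℝ D₁] [FiniteDimensional ℝ D₁]
    [AddCommGroup Y₁] [Module ℝ Y₁] [FiniteDimensional ℝ Y₁]
    {X₂ D₂ Y₂ : Type} [AddCommGroup X₂] [Module ℝ X₂] [FiniteDimensional ℝ X₂]
    [AddCommGroup D₂] [Module ℝ D₂] [FiniteDimensional ℝ D₂]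
    [AddCommGroup Y₂] [Module ℝ Y₂] [FiniteDimensional ℝ Y₂]
    (P₁ : DVSystem X₁ W D₁ Y₁) (P₂ : DVSystem X₂ W D₂ Y₂) :
    ((comp P₁ P₂).V).map (LinearMap.fst ℝ X₁ X₂) ≤ P₁.V ∧
    ((comp P₁ P₂).V).map (LinearMap.snd ℝ X₁ X₂) ≤ P₂.V := by
  set Vc := (comp P₁ P₂).V with hVc
  have hadm := (comp P₁ P₂).admissible_V
  constructor
  · apply le_sSup
    constructor
    · rintro y hy
      obtain ⟨x, ⟨p, hp, rfl⟩, rfl⟩ := hy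
      have h1 := hadm.1 (Submodule.mem_map_of_mem hp)
      rw [Submodule.mem_sup] at h1
      obtain ⟨v, hv, g, hg, hvg⟩ := h1
      obtain ⟨d, rfl⟩ := hg
      have : (P₁.A p.1, P₂.A p.2) = v + (P₁.G d.1, P₂.G d.2) := by
        simpa [comp] using hvg.symm
      have h1 : P₁.A p.1 = v.1 + P₁.G d.1 := congrArg Prod.fst this
      rw [Submodule.mem_sup]
      exact ⟨v.1, ⟨v, hv, rfl⟩, P₁.G d.1, ⟨d.1, rfl⟩, h1.symm⟩
    · rintro y ⟨p, hp, rfl⟩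
      have := hadm.2 hp
      rw [LinearMap.mem_ker] at this
      have h1 := congrArg Prod.fst this
      simpa [comp] using h1
  · apply le_sSup
    constructor
    · rintro y hy
      obtain ⟨x, ⟨p, hp, rfl⟩, rfl⟩ := hy
      have h1 := hadm.1 (Submodule.mem_map_of_mem hp)
      rw [Submodule.mem_sup] at h1
      obtain ⟨v, hv, g, hg, hvg⟩ := h1
      obtain ⟨d, rfl⟩ := hg
      have : (P₁.A p.1, P₂.A p.2) = v + (P₁.G d.1, P₂.G d.2) := by
        simpa [comp] using hvg.symm
      have h1 : P₂.A p.2 = v.2 + P₂.G d.2 := congrArg Prod.snd this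
      rw [Submodule.mem_sup]
      exact ⟨v.2, ⟨v, hv, rfl⟩, P₂.G d.2, ⟨d.2, rfl⟩, h1.symm⟩
    · rintro y ⟨p, hp, rfl⟩
      have := hadm.2 hp
      rw [LinearMap.mem_ker] at this
      have h1 := congrArg (fun q => q.2.1) this
      simpa [comp] using h1
end

section
/- Let Σ₁, Σ₂ be systems in driving variable form with the same external space W and let V∘,* be the consistent subspace of Σ₁ ∘ Σ₂. Then the subspace S = {((x₁∘, x₂∘), x₁) : x₁∘ = x₁ and (x₁∘, x₂∘) ∈ V∘,*} ⊆ (X₁ × X₂) × X₁ is a full simulation relation of Σ₁ ∘ Σ₂ by Σ₁; in particular π_{X₁×X₂}(S) = V∘,* and π_{X₁}(S) ⊆ V₁*. -/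
open DVSystem

section aux

variable {X W D Y : Type}
  [AddCommGroup X] [Module ℝ X] [AddCommGroup W] [Module ℝ W]
  [AddCommGroup D] [Module ℝ D] [AddCommGroup Y] [Module ℝ Y]

theorem DVSystem.V_admissible_s14 (P : DVSystem X W D Y) : P.Admissible P.V := by
  constructor
  · have hV : P.V = ⨆ U : {U : Submodule ℝ X | P.Admissible U}, (U : Submodule ℝ X) :=
      sSup_eq_iSup' {U : Submodule ℝ X | P.Admissible U}
    conv_lhs => rw [hV]
    rw [Submodule.map_iSup]
    apply iSup_le
    rintro ⟨U, hU⟩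
    refine hU.1.trans (sup_le_sup_right ?_ _)
    exact le_sSup hU
  · exact sSup_le fun U hU => hU.2

theorem DVSystem.V_step (P : DVSystem X W D Y) {x : X} (hx : x ∈ P.V) :
    ∃ d : D, P.A x + P.G d ∈ P.V := by
  have h := (P.V_admissible_s14).1 (Submodule.mem_map_of_mem hx)
  rw [Submodule.mem_sup] at h
  obtain ⟨v, hv, g, ⟨d, rfl⟩, heq⟩ := h
  refine ⟨-d, ?_⟩
  have : P.A x + P.G (-d) = v := by rw [map_neg, ← heq]; abel
  rwa [this]

theorem DVSystem.V_ker (P : DVSystem X W D Y) {x : X} (hx : x ∈ P.V) : P.H x = 0 :=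
  (P.V_admissible_s14).2 hx

end aux

section aux2

variable {W : Type} [AddCommGroup W] [Module ℝ W]
variable {X₁ D₁ Y₁ : Type} [AddCommGroup X₁] [Module ℝ X₁]
  [AddCommGroup D₁] [Module ℝ D₁] [AddCommGroup Y₁] [Module ℝ Y₁]
variable {X₂ D₂ Y₂ : Type} [AddCommGroup X₂] [Module ℝ X₂]
  [AddCommGroup D₂] [Module ℝ D₂] [AddCommGroup Y₂] [Module ℝ Y₂]

theorem comp_V_H {P₁ : DVSystem X₁ W D₁ Y₁} {P₂ : DVSystem X₂ W D₂ Y₂}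
    {x : X₁ × X₂} (hx : x ∈ (comp P₁ P₂).V) :
    P₁.H x.1 = 0 ∧ P₂.H x.2 = 0 ∧ P₁.C x.1 = P₂.C x.2 := by
  have h := (comp P₁ P₂).V_ker hx
  simp only [comp, LinearMap.prod_apply, LinearMap.comp_apply, LinearMap.fst_apply,
    LinearMap.snd_apply, LinearMap.sub_apply, Function.prod, Prod.mk_eq_zero] at h
  exact ⟨h.1, h.2.1, sub_eq_zero.mp h.2.2⟩

theorem comp_V_fst_le (P₁ : DVSystem X₁ W D₁ Y₁) (P₂ : DVSystem X₂ W D₂ Y₂) :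
    ((comp P₁ P₂).V).map (LinearMap.fst ℝ X₁ X₂) ≤ P₁.V := by
  apply le_sSup
  constructor
  · rintro _ ⟨_, ⟨x, hx, rfl⟩, rfl⟩
    have h := ((comp P₁ P₂).V_admissible_s14).1 (Submodule.mem_map_of_mem hx)
    rw [Submodule.mem_sup] at h
    obtain ⟨v, hv, g, ⟨d, rfl⟩, heq⟩ := h
    rw [Submodule.mem_sup]
    refine ⟨v.1, Submodule.mem_map_of_mem hv, P₁.G d.1, ⟨d.1, rfl⟩, ?_⟩
    have := congrArg Prod.fst heq
    simpa [comp] using this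
  · rintro _ ⟨x, hx, rfl⟩
    exact (comp_V_H hx).1

end aux2

/-- The subspace `{((x₁∘, x₂∘), x₁) | x₁∘ = x₁, (x₁∘, x₂∘) ∈ V∘,*}` is a full
simulation relation of `Σ₁ ∘ Σ₂` by `Σ₁`. -/
theorem comp_fullSimRel_fst {W : Type} [AddCommGroup W] [Module ℝ W] [FiniteDimensional ℝ W]
    {X₁ D₁ Y₁ : Type} [AddCommGroup X₁] [Module ℝ X₁] [FiniteDimensional ℝ X₁]
    [AddCommGroup D₁] [Module ℝ D₁] [FiniteDimensional ℝ D₁]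
    [AddCommGroup Y₁] [Module ℝ Y₁] [FiniteDimensional ℝ Y₁]
    {X₂ D₂ Y₂ : Type} [AddCommGroup X₂] [Module ℝ X₂] [FiniteDimensional ℝ X₂]
    [AddCommGroup D₂] [Module ℝ D₂] [FiniteDimensional ℝ D₂]
    [AddCommGroup Y₂] [Module ℝ Y₂] [FiniteDimensional ℝ Y₂]
    (P₁ : DVSystem X₁ W D₁ Y₁) (P₂ : DVSystem X₂ W D₂ Y₂) :
    IsFullSimRel (comp P₁ P₂) P₁
      (((comp P₁ P₂).V).map
        ((LinearMap.id : X₁ × X₂ →ₗ[ℝ] X₁ × X₂).prod (LinearMap.fst ℝ X₁ X₂))) := by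
  constructor
  · refine ⟨?_, ?_, ?_⟩
    · rintro _ ⟨_, ⟨v, hv, rfl⟩, rfl⟩
      simpa using hv
    · rintro _ ⟨_, ⟨v, hv, rfl⟩, rfl⟩
      exact comp_V_fst_le P₁ P₂ (Submodule.mem_map_of_mem hv)
    · intro x x₁ hmem
      obtain ⟨v, hv, heq⟩ := hmem
      obtain ⟨rfl, rfl⟩ : v = x ∧ v.1 = x₁ := by
        simpa [Prod.ext_iff] using heq
      constructor
      · intro d hd
        refine ⟨d.1, ?_, ?_⟩
        · have h1 : ((comp P₁ P₂).A v + (comp P₁ P₂).G d).1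
              = P₁.A v.1 + P₁.G d.1 := by simp [comp]
          exact h1 ▸ comp_V_fst_le P₁ P₂ (Submodule.mem_map_of_mem hd)
        · refine ⟨(comp P₁ P₂).A v + (comp P₁ P₂).G d, hd, ?_⟩
          simp [comp, Prod.ext_iff]
      · have hC := (comp_V_H hv).2.2
        show (comp P₁ P₂).C v = P₁.C v.1
        simp only [comp, LinearMap.smul_apply, LinearMap.add_apply,
          LinearMap.comp_apply, LinearMap.fst_apply, LinearMap.snd_apply]
        rw [← hC, ← two_smul ℝ, smul_smul]
        norm_num
  · apply le_antisymm
    · rintro _ ⟨_, ⟨v, hv, rfl⟩, rfl⟩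
      simpa using hv
    · intro y hy
      exact ⟨(y, y.1), ⟨y, hy, rfl⟩, rfl⟩
end

section
/- Spacing-policy invariance and attractivity for the controlled vehicle-following system: let h, k > 0 and let s₁, v₁, s₂, v₂ : [0,∞) → ℝ be differentiable functions satisfying ṡ₁(t) = v₁(t), ṡ₂(t) = v₂(t), and v̇₂(t) = h⁻¹(v₁(t) − v₂(t)) + k h⁻¹(s₁(t) − s₂(t) − h v₂(t)) for all t ≥ 0. Define the spacing error e(t) = −s₁(t) + s₂(t) + h v₂(t). Then e(t) = e(0) e^{−k t} for all t ≥ 0; in particular, if e(0) = 0 then e(t) = 0 for all t ≥ 0, and e(t) → 0 as t → ∞. -/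
/-- Spacing-policy invariance and attractivity for the controlled vehicle-following
system: the spacing error `e = −s₁ + s₂ + h v₂` satisfies `e(t) = e(0) e^{−k t}`;
in particular it vanishes identically if `e(0) = 0`, and it tends to `0`. -/
theorem spacing_error_exp_decay (h k : ℝ) (hh : 0 < h) (hk : 0 < k)
    (s₁ v₁ s₂ v₂ : ℝ → ℝ)
    (hs₁ : ∀ t ∈ Set.Ici (0 : ℝ), HasDerivWithinAt s₁ (v₁ t) (Set.Ici 0) t)
    (hs₂ : ∀ t ∈ Set.Ici (0 : ℝ), HasDerivWithinAt s₂ (v₂ t) (Set.Ici 0) t)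
    (hv₂ : ∀ t ∈ Set.Ici (0 : ℝ), HasDerivWithinAt v₂
      (h⁻¹ * (v₁ t - v₂ t) + k * h⁻¹ * (s₁ t - s₂ t - h * v₂ t)) (Set.Ici 0) t) :
    (∀ t ∈ Set.Ici (0 : ℝ),
      -s₁ t + s₂ t + h * v₂ t = (-s₁ 0 + s₂ 0 + h * v₂ 0) * Real.exp (-k * t)) ∧
    ((-s₁ 0 + s₂ 0 + h * v₂ 0 = 0) →
      ∀ t ∈ Set.Ici (0 : ℝ), -s₁ t + s₂ t + h * v₂ t = 0) ∧
    Filter.Tendsto (fun t => -s₁ t + s₂ t + h * v₂ t) Filter.atTop (nhds 0) := by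
  set e : ℝ → ℝ := fun t => -s₁ t + s₂ t + h * v₂ t with he
  have hne : h ≠ 0 := ne_of_gt hh
  -- derivative of e within Ici 0 is -k * e
  have hde : ∀ t ∈ Set.Ici (0 : ℝ), HasDerivWithinAt e (-k * e t) (Set.Ici 0) t := by
    intro t ht
    have := (((hs₁ t ht).neg.add (hs₂ t ht)).add ((hv₂ t ht).const_mul h))
    refine this.congr_deriv ?_
    show _ = -k * (-s₁ t + s₂ t + h * v₂ t)
    linear_combination ((v₁ t - v₂ t) + k * (s₁ t - s₂ t - h * v₂ t)) * mul_inv_cancel₀ hne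
  -- g = e * exp (k t) has zero derivative, hence constant
  set g : ℝ → ℝ := fun t => e t * Real.exp (k * t) with hg
  have hdg : ∀ t ∈ Set.Ici (0 : ℝ), HasDerivWithinAt g 0 (Set.Ici 0) t := by
    intro t ht
    have hexp : HasDerivWithinAt (fun t => Real.exp (k * t)) (k * Real.exp (k * t))
        (Set.Ici 0) t := by
      have := ((Real.hasDerivAt_exp (k * t)).comp t
        ((hasDerivAt_id t).const_mul k)).hasDerivWithinAt (s := Set.Ici (0:ℝ))
      simpa [mul_comm, Function.comp_def] using this
    have := (hde t ht).mul hexp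
    refine this.congr_deriv ?_
    ring
  have key : ∀ t ∈ Set.Ici (0 : ℝ), g t = g 0 := by
    intro t ht
    have hcont : ContinuousOn g (Set.Icc 0 t) :=
      fun x hx => ((hdg x hx.1).continuousWithinAt).mono (fun y hy => hy.1)
    have hder : ∀ x ∈ Set.Ico (0:ℝ) t, HasDerivWithinAt g 0 (Set.Ici x) x :=
      fun x hx => (hdg x hx.1).mono (Set.Ici_subset_Ici.2 hx.1)
    exact constant_of_has_deriv_right_zero hcont hder t (Set.right_mem_Icc.2 ht)
  have main : ∀ t ∈ Set.Ici (0 : ℝ), e t = e 0 * Real.exp (-k * t) := by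
    intro t ht
    have := key t ht
    simp only [hg, mul_zero, Real.exp_zero, mul_one] at this
    have hexp_ne : Real.exp (k * t) ≠ 0 := (Real.exp_pos _).ne'
    field_simp [Real.exp_neg, neg_mul] at this ⊢
    rw [Real.exp_neg, ← this, mul_inv_cancel_right₀ hexp_ne]
  refine ⟨main, fun h0 t ht => by rw [show -s₁ t + s₂ t + h * v₂ t = e t from rfl,
    main t ht, show -s₁ 0 + s₂ 0 + h * v₂ 0 = e 0 from rfl] at *; rw [h0]; ring, ?_⟩
  have hT : Filter.Tendsto (fun t => e 0 * Real.exp (-k * t)) Filter.atTop (nhds 0) := by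
    have h1 : Filter.Tendsto (fun t : ℝ => -k * t) Filter.atTop Filter.atBot := by
      exact Filter.Tendsto.const_mul_atTop_of_neg (neg_neg_iff_pos.mpr hk) Filter.tendsto_id
    simpa using (Real.tendsto_exp_atBot.comp h1).const_mul (e 0)
  refine hT.congr' ?_
  filter_upwards [Filter.eventually_ge_atTop (0:ℝ)] with t ht
  exact (main t ht).symm
end
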